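/- ℚ_n(L₀,...,L_{n-1}) is order isomorphic to ℚ_n(L₀,...,L_{n-1}) ^ ℚ_n(L₀,...,L_{n-1}), i.e. the shuffle concatenated with itself is isomorphic to the shuffle. -/

import Mathlib

/-- `Q` together with the colouring `c : Q → Fin n` is a copy of the `n`-coloured
rationals `ℚ_n`: a countable nonempty dense linear order without endpoints in which
each of the `n` colours occurs interdensely. -/
def IsQn (n : ℕ) (Q : Type*) [LinearOrder Q] (c : Q → Fin n) : Prop :=
  Countable Q ∧ Nonempty Q ∧ DenselyOrdered Q ∧ NoMinOrder Q ∧ NoMaxOrder Q ∧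
    ∀ x y : Q, x < y → ∀ i : Fin n, ∃ z : Q, x < z ∧ z < y ∧ c z = i

noncomputable section CQnAux

namespace CQn

variable {n : ℕ} {α β : Type*} [LinearOrder α] [LinearOrder β]

/-- Interdensity condition. -/
def Inter (c : β → Fin n) : Prop :=
  ∀ x y : β, x < y → ∀ i : Fin n, ∃ z : β, x < z ∧ z < y ∧ c z = i

/-- Coloured version of `Order.exists_between_finsets`. -/
theorem exists_between_finsets_colour [NoMinOrder β] [NoMaxOrder β] [Nonempty β]
    (cβ : β → Fin n) (hI : Inter cβ) (lo hi : Finset β)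
    (lo_lt_hi : ∀ x ∈ lo, ∀ y ∈ hi, x < y) (i : Fin n) :
    ∃ m : β, (∀ x ∈ lo, x < m) ∧ (∀ y ∈ hi, m < y) ∧ cβ m = i := by
  haveI : DenselyOrdered β :=
    ⟨fun x y h => (hI x y h i).elim fun z hz => ⟨z, hz.1, hz.2.1⟩⟩
  obtain ⟨m₀, hm₀lo, hm₀hi⟩ := Order.exists_between_finsets lo hi lo_lt_hi
  obtain ⟨m₁, hm₁lo, hm₁hi⟩ := Order.exists_between_finsets (insert m₀ lo) hi
    (by
      intro x hx y hy
      rcases Finset.mem_insert.1 hx with rfl | hx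
      · exact hm₀hi y hy
      · exact lo_lt_hi x hx y hy)
  have hm₀₁ : m₀ < m₁ := hm₁lo m₀ (Finset.mem_insert_self _ _)
  obtain ⟨z, hz₁, hz₂, hz₃⟩ := hI m₀ m₁ hm₀₁ i
  exact ⟨z, fun x hx => (hm₀lo x hx).trans hz₁, fun y hy => hz₂.trans (hm₁hi y hy), hz₃⟩

variable (cα : α → Fin n) (cβ : β → Fin n)

/-- Coloured partial isomorphisms. -/
def PIso : Type _ :=
  { f : Finset (α × β) //
    (∀ p ∈ f, ∀ q ∈ f, cmp (Prod.fst p) (Prod.fst q) = cmp (Prod.snd p) (Prod.snd q)) ∧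
      ∀ p ∈ f, cβ (Prod.snd p) = cα (Prod.fst p) }

namespace PIso

instance : Inhabited (PIso cα cβ) :=
  ⟨⟨∅, fun _p h => (Finset.notMem_empty _ h).elim,
    fun _p h => (Finset.notMem_empty _ h).elim⟩⟩

instance : Preorder (PIso cα cβ) := Subtype.preorder _

variable {cα cβ}

theorem exists_across [NoMinOrder β] [NoMaxOrder β] [Nonempty β] (hI : Inter cβ)
    (f : PIso cα cβ) (a : α) :
    ∃ b : β, cβ b = cα a ∧ ∀ p ∈ f.val, cmp (Prod.fst p) a = cmp (Prod.snd p) b := by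
  by_cases h : ∃ b, (a, b) ∈ f.val
  · rcases h with ⟨b, hb⟩
    exact ⟨b, f.prop.2 _ hb, fun p hp => f.prop.1 _ hp _ hb⟩
  have key :
      ∀ x ∈ (f.val.filter fun p : α × β => p.fst < a).image Prod.snd,
        ∀ y ∈ (f.val.filter fun p : α × β => a < p.fst).image Prod.snd, x < y := by
    intro x hx y hy
    rw [Finset.mem_image] at hx hy
    rcases hx with ⟨p, hp1, rfl⟩
    rcases hy with ⟨q, hq1, rfl⟩
    rw [Finset.mem_filter] at hp1 hq1
    rw [← lt_iff_lt_of_cmp_eq_cmp (f.prop.1 _ hp1.1 _ hq1.1)]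
    exact lt_trans hp1.right hq1.right
  obtain ⟨b, hb₁, hb₂, hb₃⟩ := exists_between_finsets_colour cβ hI _ _ key (cα a)
  refine ⟨b, hb₃, ?_⟩
  rintro ⟨p1, p2⟩ hp
  have hne : p1 ≠ a := fun he => h ⟨p2, he ▸ hp⟩
  rcases lt_or_gt_of_ne hne with hl | hr
  · have : p1 < a ∧ p2 < b :=
      ⟨hl, hb₁ _ (Finset.mem_image.mpr ⟨(p1, p2), Finset.mem_filter.mpr ⟨hp, hl⟩, rfl⟩)⟩
    rw [← cmp_eq_lt_iff, ← cmp_eq_lt_iff] at this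
    exact this.1.trans this.2.symm
  · have : a < p1 ∧ b < p2 :=
      ⟨hr, hb₂ _ (Finset.mem_image.mpr ⟨(p1, p2), Finset.mem_filter.mpr ⟨hp, hr⟩, rfl⟩)⟩
    rw [← cmp_eq_gt_iff, ← cmp_eq_gt_iff] at this
    exact this.1.trans this.2.symm

/-- Swap the two sides of a coloured partial isomorphism. -/
protected def comm (f : PIso cα cβ) : PIso cβ cα :=
  ⟨f.val.image (Equiv.prodComm α β),
    by
      constructor
      · intro p hp q hq
        rw [Finset.mem_image] at hp hq
        rcases hp with ⟨p', hp', rfl⟩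
        rcases hq with ⟨q', hq', rfl⟩
        exact (f.prop.1 _ hp' _ hq').symm
      · intro p hp
        rw [Finset.mem_image] at hp
        rcases hp with ⟨p', hp', rfl⟩
        exact (f.prop.2 _ hp').symm⟩

theorem mem_comm {f : PIso cα cβ} {a : α} {b : β} (h : (a, b) ∈ f.val) :
    (b, a) ∈ (f.comm).val :=
  Finset.mem_image.2 ⟨(a, b), h, rfl⟩

theorem comm_subset {f g : PIso cα cβ} (h : f ≤ g) : f.comm ≤ g.comm :=
  Finset.image_subset_image h

variable (cβ) in
/-- The cofinal set of coloured partial isos defined at `a : α`. -/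
def definedAtLeft [NoMinOrder β] [NoMaxOrder β] [Nonempty β] (hI : Inter cβ) (a : α) :
    Order.Cofinal (PIso cα cβ) where
  carrier := {f | ∃ b : β, (a, b) ∈ f.val}
  isCofinal f := by
    obtain ⟨b, hbc, a_b⟩ := exists_across hI f a
    refine
      ⟨⟨insert (a, b) f.val, ?_, ?_⟩, ⟨b, Finset.mem_insert_self _ _⟩,
        Finset.subset_insert _ _⟩
    · intro p hp q hq
      rw [Finset.mem_insert] at hp hq
      rcases hp with (rfl | pf) <;> rcases hq with (rfl | qf)
      · simp only [cmp_self_eq_eq]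
      · rw [cmp_eq_cmp_symm]
        exact a_b _ qf
      · exact a_b _ pf
      · exact f.prop.1 _ pf _ qf
    · intro p hp
      rw [Finset.mem_insert] at hp
      rcases hp with rfl | pf
      · exact hbc
      · exact f.prop.2 _ pf

variable (cα) in
/-- The cofinal set of coloured partial isos defined at `b : β`. -/
def definedAtRight [NoMinOrder α] [NoMaxOrder α] [Nonempty α] (hI : Inter cα) (b : β) :
    Order.Cofinal (PIso cα cβ) where
  carrier := {f | ∃ a, (a, b) ∈ f.val}
  isCofinal f := by
    rcases (definedAtLeft cα hI b).isCofinal f.comm with ⟨f', ⟨a, ha⟩, hl⟩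
    refine ⟨f'.comm, ⟨a, mem_comm ha⟩, ?_⟩
    rintro ⟨x, y⟩ hp
    exact mem_comm (hl (mem_comm hp))

end PIso

open PIso in
/-- Uniqueness of the coloured rationals: a colour-preserving order isomorphism. -/
theorem iso_of_isQn (hα : IsQn n α cα) (hβ : IsQn n β cβ) :
    ∃ e : α ≃o β, ∀ a, cβ (e a) = cα a := by
  obtain ⟨hc₁, hn₁, hd₁, hmin₁, hmax₁, hI₁⟩ := hα
  obtain ⟨hc₂, hn₂, hd₂, hmin₂, hmax₂, hI₂⟩ := hβ
  cases nonempty_encodable α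
  cases nonempty_encodable β
  let to_cofinal : α ⊕ β → Order.Cofinal (PIso cα cβ) := fun p =>
    Sum.recOn p (definedAtLeft cβ hI₂) (definedAtRight cα hI₁)
  let our_ideal : Order.Ideal (PIso cα cβ) := Order.idealOfCofinals default to_cofinal
  have hF : ∀ a : α, ∃ b : β, ∃ f ∈ our_ideal, (a, b) ∈ f.val := by
    intro a
    obtain ⟨f, hf₁, hf₂⟩ := Order.cofinal_meets_idealOfCofinals default to_cofinal (Sum.inl a)
    obtain ⟨b, hb⟩ := hf₁
    exact ⟨b, f, hf₂, hb⟩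
  have hG : ∀ b : β, ∃ a : α, ∃ f ∈ our_ideal, (a, b) ∈ f.val := by
    intro b
    obtain ⟨f, hf₁, hf₂⟩ := Order.cofinal_meets_idealOfCofinals default to_cofinal (Sum.inr b)
    obtain ⟨a, ha⟩ := hf₁
    exact ⟨a, f, hf₂, ha⟩
  choose F hF' using hF
  choose G hG' using hG
  have key : ∀ a b, cmp a (G b) = cmp (F a) b := by
    intro a b
    obtain ⟨f, hf, ha⟩ := hF' a
    obtain ⟨g, hg, hb⟩ := hG' b
    rcases our_ideal.directed _ hf _ hg with ⟨m, _, fm, gm⟩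
    exact m.prop.1 (a, _) (fm ha) (_, b) (gm hb)
  refine ⟨OrderIso.ofCmpEqCmp F G key, ?_⟩
  intro a
  obtain ⟨f, _, ha⟩ := hF' a
  exact f.prop.2 _ ha

end CQn

end CQnAux

section Shuffle

open CQn

variable {n : ℕ}

theorem cast_lt_cast_iff {n : ℕ} {L : Fin n → Type*} [∀ i, LinearOrder (L i)] {i j : Fin n}
    (h : i = j) (u v : L i) :
    cast (congrArg L h) u < cast (congrArg L h) v ↔ u < v := by
  subst h; simp

/-- Transporting a shuffle along a colour-preserving order isomorphism of bases. -/
noncomputable def shuffleCongr {α β : Type*} [LinearOrder α] [LinearOrder β]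
    (cα : α → Fin n) (cβ : β → Fin n) (e : α ≃o β) (hc : ∀ a, cβ (e a) = cα a)
    (L : Fin n → Type*) [∀ i, LinearOrder (L i)] :
    (Σₗ a : α, L (cα a)) ≃o (Σₗ b : β, L (cβ b)) := by
  let f : (Σₗ a : α, L (cα a)) → (Σₗ b : β, L (cβ b)) :=
    fun p => ⟨e p.1, cast (congrArg L (hc p.1).symm) p.2⟩
  have hmono : StrictMono f := by
    rintro ⟨a, x⟩ ⟨a', x'⟩ h
    rcases Sigma.Lex.lt_def.1 h with h1 | ⟨h1, h2⟩
    · exact Sigma.Lex.lt_def.2 (Or.inl (by simpa [f] using e.strictMono h1))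
    · dsimp at h1; subst h1
      refine Sigma.Lex.lt_def.2 (Or.inr ⟨rfl, ?_⟩)
      dsimp at h2 ⊢
      exact (cast_lt_cast_iff (hc a).symm x x').2 h2
  have hsurj : Function.Surjective f := by
    rintro ⟨b, y⟩
    have hb : cβ b = cα (e.symm b) := by
      conv_lhs => rw [← OrderIso.apply_symm_apply e b]
      exact hc _
    refine ⟨⟨e.symm b, cast (congrArg L hb) y⟩, ?_⟩
    refine Sigma.ext (by simp [f]) ?_
    simp [f, cast_cast]
  exact StrictMono.orderIsoOfSurjective f hmono hsurj

/-- The concatenation `Q ^ Q` with the induced colouring is again a copy of `ℚ_n`. -/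
theorem isQn_sum {Q : Type*} [LinearOrder Q] {c : Q → Fin n} (hQ : IsQn n Q c) :
    IsQn n (Q ⊕ₗ Q) (fun b => Sum.elim c c (ofLex b)) := by
  obtain ⟨hc₁, hn₁, hd₁, hmin₁, hmax₁, hI₁⟩ := hQ
  haveI := hc₁; haveI := hn₁; haveI := hd₁; haveI := hmin₁; haveI := hmax₁
  refine ⟨inferInstanceAs (Countable (Q ⊕ Q)), inferInstanceAs (Nonempty (Q ⊕ Q)),
    inferInstance, inferInstance, inferInstance, ?_⟩
  rintro x y hxy i
  rcases x with x | x <;> rcases y with y | y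
  · have hxy' : x < y := Sum.Lex.inl_lt_inl_iff.1 hxy
    obtain ⟨z, h1, h2, h3⟩ := hI₁ x y hxy' i
    exact ⟨toLex (Sum.inl z), Sum.Lex.inl_lt_inl_iff.2 h1, Sum.Lex.inl_lt_inl_iff.2 h2, h3⟩
  · obtain ⟨w, hw⟩ := exists_gt x
    obtain ⟨z, h1, h2, h3⟩ := hI₁ x w hw i
    exact ⟨toLex (Sum.inl z), Sum.Lex.inl_lt_inl_iff.2 h1, Sum.Lex.inl_lt_inr _ _, h3⟩
  · exact absurd hxy (Sum.Lex.not_inr_lt_inl)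
  · have hxy' : x < y := Sum.Lex.inr_lt_inr_iff.1 hxy
    obtain ⟨z, h1, h2, h3⟩ := hI₁ x y hxy' i
    exact ⟨toLex (Sum.inr z), Sum.Lex.inr_lt_inr_iff.2 h1, Sum.Lex.inr_lt_inr_iff.2 h2, h3⟩

/-- Splitting a shuffle over a concatenated base. -/
noncomputable def shuffleSplit {Q : Type*} [LinearOrder Q] (c : Q → Fin n)
    (L : Fin n → Type*) [∀ i, LinearOrder (L i)] :
    (Σₗ b : Q ⊕ₗ Q, L (Sum.elim c c (ofLex b))) ≃o
      ((Σₗ q : Q, L (c q)) ⊕ₗ (Σₗ q : Q, L (c q))) := by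
  let g : (Σₗ b : Q ⊕ₗ Q, L (Sum.elim c c (ofLex b))) →
      ((Σₗ q : Q, L (c q)) ⊕ₗ (Σₗ q : Q, L (c q))) :=
    fun p =>
      match p with
      | ⟨Sum.inl q, x⟩ => toLex (Sum.inl ⟨q, x⟩)
      | ⟨Sum.inr q, x⟩ => toLex (Sum.inr ⟨q, x⟩)
  have hmono : StrictMono g := by
    rintro ⟨a, x⟩ ⟨a', x'⟩ h
    rcases Sigma.Lex.lt_def.1 h with h1 | ⟨h1, h2⟩
    · rcases a with a | a <;> rcases a' with a' | a'
      · exact Sum.Lex.inl_lt_inl_iff.2 (Sigma.Lex.lt_def.2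
          (Or.inl (Sum.Lex.inl_lt_inl_iff.1 h1)))
      · exact Sum.Lex.inl_lt_inr _ _
      · exact absurd h1 Sum.Lex.not_inr_lt_inl
      · exact Sum.Lex.inr_lt_inr_iff.2 (Sigma.Lex.lt_def.2
          (Or.inl (Sum.Lex.inr_lt_inr_iff.1 h1)))
    · rcases a with a | a
      · cases h1
        exact Sum.Lex.inl_lt_inl_iff.2 (Sigma.Lex.lt_def.2 (Or.inr ⟨rfl, h2⟩))
      · cases h1
        exact Sum.Lex.inr_lt_inr_iff.2 (Sigma.Lex.lt_def.2 (Or.inr ⟨rfl, h2⟩))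
  have hsurj : Function.Surjective g := by
    rintro (⟨q, x⟩ | ⟨q, x⟩)
    · exact ⟨⟨Sum.inl q, x⟩, rfl⟩
    · exact ⟨⟨Sum.inr q, x⟩, rfl⟩
  exact StrictMono.orderIsoOfSurjective g hmono hsurj

end Shuffle

/-- The shuffle concatenated with itself is isomorphic to the shuffle:
ℚ_n(L₀,...,L_{n-1}) ≅ ℚ_n(L₀,...,L_{n-1}) ^ ℚ_n(L₀,...,L_{n-1}). -/
theorem shuffle_self_concat (n : ℕ) (Q : Type*) [LinearOrder Q] (c : Q → Fin n)
    (hQ : IsQn n Q c) (L : Fin n → Type*) [∀ i, LinearOrder (L i)] [∀ i, Nonempty (L i)] :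
    Nonempty ((Σₗ q : Q, L (c q)) ≃o ((Σₗ q : Q, L (c q)) ⊕ₗ (Σₗ q : Q, L (c q)))) := by
  obtain ⟨e, hce⟩ := CQn.iso_of_isQn c (fun b => Sum.elim c c (ofLex b)) hQ (isQn_sum hQ)
  exact ⟨(shuffleCongr c (fun b : Q ⊕ₗ Q => Sum.elim c c (ofLex b)) e hce L).trans (shuffleSplit c L)⟩
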